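/- Fix 2 < r ≤ ∞ and set γ = (r−2)/r. Let W be a symmetric n×n matrix whose only nonzero entries are W_{2k−1,2k} = W_{2k,2k−1} = c_k for k ∈ [m] with 2m ≤ n. Then M_r(W) = ‖W‖_{r→r*} = ( 2 Σ_{k=1}^m |c_k|^{r/(r−2)} )^{(r−2)/r}, where r* = r/(r−1). -/

import Mathlib

open Matrix ENNReal

/-- The ℓ_q norm on ℝⁿ for an extended-real exponent `q ∈ [1,∞]`. -/
noncomputable def lnorm {n : ℕ} (q : ℝ≥0∞) (x : Fin n → ℝ) : ℝ :=
  if q = ⊤ then ⨆ i, |x i| else (∑ i, |x i| ^ q.toReal) ^ (1 / q.toReal)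

/-- The `r → p` operator norm of an `n × n` real matrix. -/
noncomputable def opNorm {n : ℕ} (r p : ℝ≥0∞) (A : Matrix (Fin n) (Fin n) ℝ) : ℝ :=
  sSup {c | ∃ x : Fin n → ℝ, lnorm r x ≤ 1 ∧ c = lnorm p (A.mulVec x)}

/-- The value of the ℓ_r-Grothendieck problem `M_r(A)`. -/
noncomputable def grothendieck {n : ℕ} (r : ℝ≥0∞) (A : Matrix (Fin n) (Fin n) ℝ) : ℝ :=
  sSup {c | ∃ x : Fin n → ℝ, lnorm r x ≤ 1 ∧ c = x ⬝ᵥ A.mulVec x}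

/-- The Hölder conjugate of `p ∈ [1,∞]`. -/
noncomputable def holderConj (p : ℝ≥0∞) : ℝ≥0∞ :=
  if p = 1 then ⊤ else if p = ⊤ then 1 else ENNReal.ofReal (p.toReal / (p.toReal - 1))

open scoped NNReal

private lemma sum_range_two_mul (m : ℕ) (g : ℕ → ℝ) :
    ∑ j ∈ Finset.range (2*m), g j = ∑ k ∈ Finset.range m, (g (2*k) + g (2*k+1)) := by
  induction m with
  | zero => simp
  | succ m ih =>
    have h2 : 2 * (m+1) = (2*m + 1) + 1 := by ring
    rw [Finset.sum_range_succ, ← ih, h2, Finset.sum_range_succ, Finset.sum_range_succ]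
    ring

private lemma two_point (A B : ℝ) (hA : 0 ≤ A) (hB : 0 ≤ B) {p : ℝ} (hp : 1 ≤ p) :
    (A + B) ^ p ≤ 2 ^ (p-1) * (A ^ p + B ^ p) := by
  have h := NNReal.rpow_add_le_mul_rpow_add_rpow A.toNNReal B.toNNReal hp
  have h2 : (((A.toNNReal + B.toNNReal : ℝ≥0) : ℝ)) = A + B := by
    simp [Real.coe_toNNReal, hA, hB]
  calc (A+B)^p = (((A.toNNReal + B.toNNReal : ℝ≥0) : ℝ))^p := by rw [h2]
    _ = (((A.toNNReal + B.toNNReal) ^ p : ℝ≥0) : ℝ) := by rw [NNReal.coe_rpow]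
    _ ≤ (((2:ℝ≥0) ^ (p-1) * (A.toNNReal ^ p + B.toNNReal ^ p) : ℝ≥0) : ℝ) := by
        exact_mod_cast h
    _ = 2 ^ (p-1) * (A ^ p + B ^ p) := by
        push_cast
        rw [Real.coe_toNNReal _ hA, Real.coe_toNNReal _ hB]

/-- extension of a `Fin n` function to ℕ by zero -/
private def ext0 {n : ℕ} (x : Fin n → ℝ) : ℕ → ℝ := fun j => if h : j < n then x ⟨j, h⟩ else 0

private lemma sum_fin_pairs {n m : ℕ} (hn : 2*m ≤ n) (f : Fin n → ℝ)
    (hz : ∀ j : Fin n, 2*m ≤ j.val → f j = 0) :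
    ∑ j, f j = ∑ k ∈ Finset.range m, (ext0 f (2*k) + ext0 f (2*k+1)) := by
  have h1 : ∑ j, f j = ∑ j ∈ Finset.range n, ext0 f j := by
    rw [← Fin.sum_univ_eq_sum_range]
    exact Finset.sum_congr rfl fun j _ => by simp [ext0, j.isLt]
  have h2 : ∑ j ∈ Finset.range n, ext0 f j = ∑ j ∈ Finset.range (2*m), ext0 f j := by
    refine (Finset.sum_subset (Finset.range_subset_range.2 hn) ?_).symm
    intro j hj hj2
    simp only [Finset.mem_range] at hj hj2
    simp only [ext0, dif_pos hj]
    exact hz _ (le_of_not_gt hj2)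
  rw [h1, h2, sum_range_two_mul]

private lemma sum_fin_pairs_le {n m : ℕ} (hn : 2*m ≤ n) (f : Fin n → ℝ)
    (hf : ∀ j, 0 ≤ f j) :
    ∑ k ∈ Finset.range m, (ext0 f (2*k) + ext0 f (2*k+1)) ≤ ∑ j, f j := by
  have h1 : ∑ j, f j = ∑ j ∈ Finset.range n, ext0 f j := by
    rw [← Fin.sum_univ_eq_sum_range]
    exact Finset.sum_congr rfl fun j _ => by simp [ext0, j.isLt]
  rw [h1, ← sum_range_two_mul]
  refine Finset.sum_le_sum_of_subset_of_nonneg (Finset.range_subset_range.2 hn) ?_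
  intro j _ _
  simp only [ext0]
  split
  · exact hf _
  · exact le_rfl

section Struct
variable {n m : ℕ} {W : Matrix (Fin n) (Fin n) ℝ} {c : ℕ → ℝ}

private lemma mulVec_even
    (hsupp : ∀ i j : Fin n, W i j ≠ 0 → ∃ k : ℕ, k < m ∧
      ((i.val = 2 * k ∧ j.val = 2 * k + 1) ∨ (i.val = 2 * k + 1 ∧ j.val = 2 * k)))
    (hval : ∀ k : ℕ, k < m → ∀ i j : Fin n,
      i.val = 2 * k → j.val = 2 * k + 1 → W i j = c k)
    (x : Fin n → ℝ) {k : ℕ} (hk : k < m)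
    (i j : Fin n) (hi : i.val = 2*k) (hj : j.val = 2*k+1) :
    W.mulVec x i = c k * x j := by
  have : W.mulVec x i = ∑ l, W i l * x l := by
    simp [Matrix.mulVec, dotProduct]
  rw [this, Finset.sum_eq_single j]
  · rw [hval k hk i j hi hj]
  · intro l _ hl
    rcases eq_or_ne (W i l) 0 with h0 | h0
    · rw [h0]; ring
    · obtain ⟨k', hk', ⟨h1, h2⟩ | ⟨h1, h2⟩⟩ := hsupp i l h0
      · exact absurd (Fin.ext (show l.val = j.val by omega)) hl
      · exfalso; omega
  · intro h; exact absurd (Finset.mem_univ j) h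

private lemma mulVec_odd (hW : W.IsSymm)
    (hsupp : ∀ i j : Fin n, W i j ≠ 0 → ∃ k : ℕ, k < m ∧
      ((i.val = 2 * k ∧ j.val = 2 * k + 1) ∨ (i.val = 2 * k + 1 ∧ j.val = 2 * k)))
    (hval : ∀ k : ℕ, k < m → ∀ i j : Fin n,
      i.val = 2 * k → j.val = 2 * k + 1 → W i j = c k)
    (x : Fin n → ℝ) {k : ℕ} (hk : k < m)
    (i j : Fin n) (hi : i.val = 2*k+1) (hj : j.val = 2*k) :
    W.mulVec x i = c k * x j := by
  have : W.mulVec x i = ∑ l, W i l * x l := by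
    simp [Matrix.mulVec, dotProduct]
  rw [this, Finset.sum_eq_single j]
  · rw [hW.apply j i, hval k hk j i hj hi]
  · intro l _ hl
    rcases eq_or_ne (W i l) 0 with h0 | h0
    · rw [h0]; ring
    · obtain ⟨k', hk', ⟨h1, h2⟩ | ⟨h1, h2⟩⟩ := hsupp i l h0
      · exfalso; omega
      · exact absurd (Fin.ext (show l.val = j.val by omega)) hl
  · intro h; exact absurd (Finset.mem_univ j) h

private lemma mulVec_far
    (hsupp : ∀ i j : Fin n, W i j ≠ 0 → ∃ k : ℕ, k < m ∧
      ((i.val = 2 * k ∧ j.val = 2 * k + 1) ∨ (i.val = 2 * k + 1 ∧ j.val = 2 * k)))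
    (x : Fin n → ℝ) (i : Fin n) (hi : 2*m ≤ i.val) :
    W.mulVec x i = 0 := by
  have : W.mulVec x i = ∑ l, W i l * x l := by
    simp [Matrix.mulVec, dotProduct]
  rw [this]
  refine Finset.sum_eq_zero fun l _ => ?_
  rcases eq_or_ne (W i l) 0 with h0 | h0
  · rw [h0]; ring
  · obtain ⟨k', hk', ⟨h1, h2⟩ | ⟨h1, h2⟩⟩ := hsupp i l h0 <;> (exfalso; omega)

end Struct

section Core

private lemma core_groth {m : ℕ} {rt : ℝ} (hrt : 2 < rt) (c a b : ℕ → ℝ)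
    (hab : ∑ k ∈ Finset.range m, (|a k| ^ rt + |b k| ^ rt) ≤ 1) :
    ∑ k ∈ Finset.range m, 2 * (c k * (a k * b k)) ≤
      (2 * ∑ k ∈ Finset.range m, |c k| ^ (rt/(rt-2))) ^ ((rt-2)/rt) := by
  have h2 : (0:ℝ) < rt - 2 := by linarith
  have h0 : (0:ℝ) < rt := by linarith
  set p := rt/(rt-2) with hp
  set q := rt/2 with hq
  have hpq : Real.HolderConjugate p q := by
    rw [Real.holderConjugate_iff]; constructor
    · rw [hp, lt_div_iff₀ h2]; linarith
    · rw [hp, hq]; field_simp; ring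
  have hq1 : (1:ℝ) ≤ q := by rw [hq]; nlinarith
  set Sc := ∑ k ∈ Finset.range m, |c k| ^ p with hSc
  have hSc0 : 0 ≤ Sc := Finset.sum_nonneg fun k _ => Real.rpow_nonneg (abs_nonneg _) _
  -- step 1: pointwise AM-GM
  have step1 : ∑ k ∈ Finset.range m, 2 * (c k * (a k * b k)) ≤
      ∑ k ∈ Finset.range m, |c k| * (a k^2 + b k^2) := by
    refine Finset.sum_le_sum fun k _ => ?_
    have h1 : 2 * (c k * (a k * b k)) ≤ 2 * (|c k| * (|a k| * |b k|)) := by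
      calc 2 * (c k * (a k * b k)) ≤ 2 * |c k * (a k * b k)| := by
            have := le_abs_self (c k * (a k * b k)); linarith
        _ = 2 * (|c k| * (|a k| * |b k|)) := by rw [abs_mul, abs_mul]
    have h2' : 2 * (|a k| * |b k|) ≤ a k^2 + b k^2 := by
      nlinarith [sq_nonneg (|a k| - |b k|), sq_abs (a k), sq_abs (b k)]
    nlinarith [abs_nonneg (c k)]
  -- step 2: Hölder
  have step2 : ∑ k ∈ Finset.range m, |c k| * (a k^2 + b k^2) ≤
      (∑ k ∈ Finset.range m, |c k| ^ p) ^ (1/p) *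
      (∑ k ∈ Finset.range m, (a k^2 + b k^2) ^ q) ^ (1/q) := by
    have := Real.inner_le_Lp_mul_Lq (Finset.range m)
      (fun k => |c k|) (fun k => a k^2 + b k^2) hpq
    simpa [abs_abs, abs_of_nonneg (by positivity : (0:ℝ) ≤ a _ ^2 + b _ ^2)] using this
  -- step 3: bound the second factor
  have hsq : ∀ (t : ℝ), (t^2) ^ q = |t| ^ rt := by
    intro t
    rw [← sq_abs, ← Real.rpow_natCast |t| 2, ← Real.rpow_mul (abs_nonneg t)]
    norm_num [hq]
    rw [mul_div_cancel₀]; norm_num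
  have step3 : (∑ k ∈ Finset.range m, (a k^2 + b k^2) ^ q) ≤ 2 ^ (q - 1) := by
    calc ∑ k ∈ Finset.range m, (a k^2 + b k^2) ^ q
        ≤ ∑ k ∈ Finset.range m, 2 ^ (q-1) * ((a k^2) ^ q + (b k^2) ^ q) := by
          refine Finset.sum_le_sum fun k _ => ?_
          exact two_point _ _ (sq_nonneg _) (sq_nonneg _) hq1
      _ = 2 ^ (q-1) * ∑ k ∈ Finset.range m, (|a k| ^ rt + |b k| ^ rt) := by
          rw [Finset.mul_sum]
          exact Finset.sum_congr rfl fun k _ => by rw [hsq, hsq]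
      _ ≤ 2 ^ (q-1) * 1 := by
          have : (0:ℝ) ≤ 2 ^ (q-1) := by positivity
          nlinarith
      _ = 2 ^ (q-1) := mul_one _
  -- combine
  have hfac2 : (∑ k ∈ Finset.range m, (a k^2 + b k^2) ^ q) ^ (1/q) ≤ 2 ^ ((rt-2)/rt) := by
    calc (∑ k ∈ Finset.range m, (a k^2 + b k^2) ^ q) ^ (1/q)
        ≤ (2 ^ (q-1)) ^ (1/q) := by
          refine Real.rpow_le_rpow ?_ step3 (by positivity)
          exact Finset.sum_nonneg fun k _ => Real.rpow_nonneg (by positivity) _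
      _ = 2 ^ ((rt-2)/rt) := by
          rw [← Real.rpow_mul (by norm_num)]
          congr 1
          rw [hq]; field_simp
  calc ∑ k ∈ Finset.range m, 2 * (c k * (a k * b k))
      ≤ (∑ k ∈ Finset.range m, |c k| ^ p) ^ (1/p) *
        (∑ k ∈ Finset.range m, (a k^2 + b k^2) ^ q) ^ (1/q) := le_trans step1 step2
    _ ≤ Sc ^ (1/p) * 2 ^ ((rt-2)/rt) := by
        refine mul_le_mul_of_nonneg_left hfac2 (Real.rpow_nonneg hSc0 _)
    _ = (2 * Sc) ^ ((rt-2)/rt) := by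
        rw [Real.mul_rpow (by norm_num) hSc0]
        have : 1/p = (rt-2)/rt := by rw [hp]; field_simp
        rw [this, mul_comm]

end Core

private lemma core_op {m : ℕ} {rt : ℝ} (hrt : 2 < rt) (c a b : ℕ → ℝ)
    (hab : ∑ k ∈ Finset.range m, (|a k| ^ rt + |b k| ^ rt) ≤ 1) :
    (∑ k ∈ Finset.range m,
        (|c k * b k| ^ (rt/(rt-1)) + |c k * a k| ^ (rt/(rt-1)))) ^ ((rt-1)/rt) ≤
      (2 * ∑ k ∈ Finset.range m, |c k| ^ (rt/(rt-2))) ^ ((rt-2)/rt) := by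
  have h2 : (0:ℝ) < rt - 2 := by linarith
  have h1 : (0:ℝ) < rt - 1 := by linarith
  have h0 : (0:ℝ) < rt := by linarith
  set s := rt/(rt-1) with hs
  have hs0 : 0 < s := by positivity
  set p := (rt-1)/(rt-2) with hp
  set q := rt-1 with hqdef
  have hpq : Real.HolderConjugate p q := by
    rw [Real.holderConjugate_iff]; constructor
    · rw [hp, lt_div_iff₀ h2]; linarith
    · rw [hp, hqdef]; field_simp; rw [show rt - 2 + 1 = rt - 1 by ring]; exact div_self (by linarith)
  have hq1 : (1:ℝ) ≤ q := by rw [hqdef]; linarith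
  set Sc := ∑ k ∈ Finset.range m, |c k| ^ (rt/(rt-2)) with hSc
  have hSc0 : 0 ≤ Sc := Finset.sum_nonneg fun k _ => Real.rpow_nonneg (abs_nonneg _) _
  have hsp : s * p = rt/(rt-2) := by rw [hs, hp]; field_simp
  have hsq : s * q = rt := by rw [hs, hqdef]; field_simp; exact div_self (by linarith)
  -- rewrite inner sum as product form
  have hre : ∀ k, |c k * b k| ^ s + |c k * a k| ^ s
      = |c k| ^ s * (|b k| ^ s + |a k| ^ s) := by
    intro k
    rw [abs_mul, abs_mul, Real.mul_rpow (abs_nonneg _) (abs_nonneg _),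
      Real.mul_rpow (abs_nonneg _) (abs_nonneg _)]
    ring
  have key : ∑ k ∈ Finset.range m, (|c k * b k| ^ s + |c k * a k| ^ s)
      ≤ (2 * Sc) ^ ((rt-2)/(rt-1)) := by
    calc ∑ k ∈ Finset.range m, (|c k * b k| ^ s + |c k * a k| ^ s)
        = ∑ k ∈ Finset.range m, (|c k| ^ s) * (|b k| ^ s + |a k| ^ s) :=
          Finset.sum_congr rfl fun k _ => hre k
      _ ≤ (∑ k ∈ Finset.range m, |(|c k| ^ s)| ^ p) ^ (1/p) *
          (∑ k ∈ Finset.range m, |(|b k| ^ s + |a k| ^ s)| ^ q) ^ (1/q) :=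
          Real.inner_le_Lp_mul_Lq (Finset.range m) _ _ hpq
      _ = (∑ k ∈ Finset.range m, |c k| ^ (rt/(rt-2))) ^ (1/p) *
          (∑ k ∈ Finset.range m, (|b k| ^ s + |a k| ^ s) ^ q) ^ (1/q) := by
          congr 1
          · congr 1
            refine Finset.sum_congr rfl fun k _ => ?_
            rw [abs_of_nonneg (Real.rpow_nonneg (abs_nonneg _) _),
              ← Real.rpow_mul (abs_nonneg _), hsp]
          · congr 1
            refine Finset.sum_congr rfl fun k _ => ?_
            rw [abs_of_nonneg (by positivity)]
      _ ≤ Sc ^ (1/p) * (2 ^ (q-1)) ^ (1/q) := by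
          refine mul_le_mul_of_nonneg_left ?_ (Real.rpow_nonneg hSc0 _)
          refine Real.rpow_le_rpow (Finset.sum_nonneg fun k _ => by positivity) ?_ (by positivity)
          calc ∑ k ∈ Finset.range m, (|b k| ^ s + |a k| ^ s) ^ q
              ≤ ∑ k ∈ Finset.range m, 2 ^ (q-1) * ((|b k| ^ s) ^ q + (|a k| ^ s) ^ q) :=
                Finset.sum_le_sum fun k _ =>
                  two_point _ _ (Real.rpow_nonneg (abs_nonneg _) _)
                    (Real.rpow_nonneg (abs_nonneg _) _) hq1
            _ = 2 ^ (q-1) * ∑ k ∈ Finset.range m, (|b k| ^ rt + |a k| ^ rt) := by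
                rw [Finset.mul_sum]
                refine Finset.sum_congr rfl fun k _ => ?_
                rw [← Real.rpow_mul (abs_nonneg _), ← Real.rpow_mul (abs_nonneg _), hsq]
            _ ≤ 2 ^ (q-1) * 1 := by
                have hb : ∑ k ∈ Finset.range m, (|b k| ^ rt + |a k| ^ rt) ≤ 1 := by
                  rw [show (∑ k ∈ Finset.range m, (|b k| ^ rt + |a k| ^ rt))
                    = ∑ k ∈ Finset.range m, (|a k| ^ rt + |b k| ^ rt) from
                    Finset.sum_congr rfl fun k _ => by ring]
                  exact hab
                have : (0:ℝ) ≤ 2 ^ (q-1) := by positivity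
                nlinarith
            _ = 2 ^ (q-1) := mul_one _
      _ = (2 * Sc) ^ ((rt-2)/(rt-1)) := by
          rw [Real.mul_rpow (by norm_num) hSc0]
          have e1 : (1:ℝ)/p = (rt-2)/(rt-1) := by rw [hp]; field_simp; rw [hqdef]; exact (div_self (by linarith)).symm
          have e2 : ((2:ℝ) ^ (q-1)) ^ (1/q) = 2 ^ ((rt-2)/(rt-1)) := by
            rw [← Real.rpow_mul (by norm_num)]
            congr 1
            rw [hqdef]; field_simp; ring
          rw [e1, e2, mul_comm]
  calc (∑ k ∈ Finset.range m, (|c k * b k| ^ s + |c k * a k| ^ s)) ^ (q/rt)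
      ≤ ((2 * Sc) ^ ((rt-2)/(rt-1))) ^ (q/rt) := by
        refine Real.rpow_le_rpow (Finset.sum_nonneg fun k _ => by positivity) key (by positivity)
    _ = (2 * Sc) ^ ((rt-2)/rt) := by
        rw [← Real.rpow_mul (by positivity)]
        congr 1
        rw [hqdef]; field_simp; exact div_self (by linarith)

private lemma opt {m : ℕ} {rt : ℝ} (hrt : 2 < rt) (c : ℕ → ℝ)
    (hSc : 0 < ∑ k ∈ Finset.range m, |c k| ^ (rt/(rt-2))) :
    ∃ xi : ℕ → ℝ, (∀ j, 2*m ≤ j → xi j = 0) ∧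
      ∑ k ∈ Finset.range m, (|xi (2*k)| ^ rt + |xi (2*k+1)| ^ rt) = 1 ∧
      ∑ k ∈ Finset.range m, 2*(c k * (xi (2*k) * xi (2*k+1)))
        = (2 * ∑ k ∈ Finset.range m, |c k| ^ (rt/(rt-2))) ^ ((rt-2)/rt) ∧
      ∑ k ∈ Finset.range m,
          (|c k * xi (2*k+1)| ^ (rt/(rt-1)) + |c k * xi (2*k)| ^ (rt/(rt-1)))
        = (2 * ∑ k ∈ Finset.range m, |c k| ^ (rt/(rt-2))) ^ ((rt-2)/(rt-1)) := by
  have h2 : (0:ℝ) < rt - 2 := by linarith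
  have h1 : (0:ℝ) < rt - 1 := by linarith
  have h0 : (0:ℝ) < rt := by linarith
  set pp := rt/(rt-2) with hpp
  set s := rt/(rt-1) with hs
  have hpp0 : pp ≠ 0 := by rw [hpp]; exact div_ne_zero (by linarith) (by linarith)
  have hs0' : s ≠ 0 := by rw [hs]; exact div_ne_zero (by linarith) (by linarith)
  set Sc := ∑ k ∈ Finset.range m, |c k| ^ pp with hScdef
  have h2S : (0:ℝ) < 2 * Sc := by linarith
  set lam := (2*Sc) ^ (-(1/rt)) with hlam
  have hlam0 : 0 < lam := Real.rpow_pos_of_pos h2S _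
  set sg : ℕ → ℝ := fun k => if c k < 0 then -1 else 1 with hsg
  set u : ℕ → ℝ := fun k => |c k| ^ (1/(rt-2)) with hu
  have hu0 : ∀ k, 0 ≤ u k := fun k => Real.rpow_nonneg (abs_nonneg _) _
  set t : ℕ → ℝ := fun k => lam * u k with ht
  have ht0 : ∀ k, 0 ≤ t k := fun k => mul_nonneg hlam0.le (hu0 k)
  set xi : ℕ → ℝ := fun j =>
    if j < 2*m then (if j % 2 = 0 then sg (j/2) * t (j/2) else t (j/2)) else 0 with hxi
  have hz : ∀ j, 2*m ≤ j → xi j = 0 := by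
    intro j hj; rw [hxi]; dsimp only; rw [if_neg (by omega)]
  have e0 : ∀ k, k < m → xi (2*k) = sg k * t k := by
    intro k hk
    have hm2 : (2*k) % 2 = 0 := by omega
    have hd2 : (2*k)/2 = k := by omega
    rw [hxi]; dsimp only; rw [if_pos (by omega), if_pos hm2, hd2]
  have e1 : ∀ k, k < m → xi (2*k+1) = t k := by
    intro k hk
    have hm2 : ¬ ((2*k+1) % 2 = 0) := by omega
    have hd2 : (2*k+1)/2 = k := by omega
    rw [hxi]; dsimp only; rw [if_pos (by omega), if_neg hm2, hd2]
  have habs_sg : ∀ k, |sg k| = 1 := by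
    intro k; rw [hsg]; dsimp only; split <;> norm_num
  have hsgc : ∀ k, c k * sg k = |c k| := by
    intro k; rw [hsg]; dsimp only; split
    · rw [abs_of_neg (by assumption)]; ring
    · rw [abs_of_nonneg (le_of_not_gt (by assumption))]; ring
  have hurt : ∀ k, u k ^ rt = |c k| ^ pp := by
    intro k
    rw [hu]; dsimp only
    rw [← Real.rpow_mul (abs_nonneg _)]
    congr 1
    rw [hpp]; field_simp
  have hlamrt : lam ^ rt = (2*Sc)⁻¹ := by
    rw [hlam, ← Real.rpow_mul h2S.le,
      show -(1/rt) * rt = -1 by field_simp]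
    exact Real.rpow_neg_one _
  have P1 : ∀ k, |t k| ^ rt = lam ^ rt * |c k| ^ pp := by
    intro k
    rw [abs_of_nonneg (ht0 k), ht]; dsimp only
    rw [Real.mul_rpow hlam0.le (hu0 k), hurt]
  have P2 : ∀ k, c k * ((sg k * t k) * t k) = (lam*lam) * |c k| ^ pp := by
    intro k
    rcases eq_or_ne (c k) 0 with hc | hc
    · rw [hc, abs_zero, Real.zero_rpow hpp0]; ring
    · have hca : 0 < |c k| := abs_pos.2 hc
      have huu : u k * u k = |c k| ^ (2/(rt-2)) := by
        rw [hu]; dsimp only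
        rw [← Real.rpow_add hca]
        congr 1; ring
      calc c k * ((sg k * t k) * t k) = (c k * sg k) * ((lam * lam) * (u k * u k)) := by
            rw [ht]; dsimp only; ring
        _ = (lam*lam) * (|c k| * |c k| ^ (2/(rt-2))) := by rw [hsgc, huu]; ring
        _ = (lam*lam) * |c k| ^ pp := by
            congr 1
            nth_rewrite 1 [← Real.rpow_one |c k|]
            rw [← Real.rpow_add hca]
            congr 1
            rw [hpp]; field_simp; ring
  have P3 : ∀ k, |c k * t k| ^ s = lam ^ s * |c k| ^ pp := by
    intro k
    rcases eq_or_ne (c k) 0 with hc | hc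
    · rw [hc, zero_mul, abs_zero, Real.zero_rpow hs0', Real.zero_rpow hpp0, mul_zero]
    · have hca : 0 < |c k| := abs_pos.2 hc
      have hcu : |c k| * u k = |c k| ^ ((rt-1)/(rt-2)) := by
        rw [hu]; dsimp only
        nth_rewrite 1 [← Real.rpow_one |c k|]
        rw [← Real.rpow_add hca]
        congr 1; field_simp; ring
      calc |c k * t k| ^ s = (lam * (|c k| * u k)) ^ s := by
            rw [abs_mul, abs_of_nonneg (ht0 k), ht]; dsimp only; ring_nf
        _ = lam ^ s * (|c k| ^ ((rt-1)/(rt-2))) ^ s := by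
            rw [hcu, Real.mul_rpow hlam0.le (Real.rpow_nonneg (abs_nonneg _) _)]
        _ = lam ^ s * |c k| ^ pp := by
            rw [← Real.rpow_mul (abs_nonneg _),
              show ((rt-1)/(rt-2)) * s = pp by rw [hpp, hs]; field_simp]
  refine ⟨xi, hz, ?_, ?_, ?_⟩
  · -- F1
    have : ∀ k ∈ Finset.range m, |xi (2*k)| ^ rt + |xi (2*k+1)| ^ rt
        = (2 * lam ^ rt) * |c k| ^ pp := by
      intro k hk
      rw [e0 k (Finset.mem_range.1 hk), e1 k (Finset.mem_range.1 hk),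
        abs_mul, habs_sg, one_mul, P1]
      ring
    rw [Finset.sum_congr rfl this, ← Finset.mul_sum, ← hScdef, hlamrt]
    field_simp
  · -- F2
    have hterm : ∀ k ∈ Finset.range m, 2*(c k * (xi (2*k) * xi (2*k+1)))
        = (2 * (lam*lam)) * |c k| ^ pp := by
      intro k hk
      rw [e0 k (Finset.mem_range.1 hk), e1 k (Finset.mem_range.1 hk), P2]
      ring
    rw [Finset.sum_congr rfl hterm, ← Finset.mul_sum, ← hScdef]
    have hexp : (rt-2)/rt = 1 + (-(1/rt) + -(1/rt)) := by field_simp; ring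
    rw [hexp, Real.rpow_add h2S, Real.rpow_one, hlam, ← Real.rpow_add h2S]
    ring
  · -- F3
    have hterm : ∀ k ∈ Finset.range m,
        |c k * xi (2*k+1)| ^ s + |c k * xi (2*k)| ^ s
        = (2 * lam ^ s) * |c k| ^ pp := by
      intro k hk
      rw [e0 k (Finset.mem_range.1 hk), e1 k (Finset.mem_range.1 hk)]
      have habs2 : |c k * (sg k * t k)| = |c k * t k| := by
        rw [abs_mul, abs_mul, habs_sg, one_mul, ← abs_mul]
      rw [habs2, P3]
      ring
    rw [Finset.sum_congr rfl hterm, ← Finset.mul_sum, ← hScdef]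
    have hexp : (rt-2)/(rt-1) = 1 + (-(1/rt) * s) := by rw [hs]; field_simp; ring
    rw [hexp, Real.rpow_add h2S, Real.rpow_one, hlam, ← Real.rpow_mul h2S.le]
    ring

private lemma sum_fin_pairs' {n m : ℕ} (hn : 2*m ≤ n) (f : Fin n → ℝ) (F : ℕ → ℝ)
    (hz : ∀ j : Fin n, 2*m ≤ j.val → f j = 0)
    (hF : ∀ k, (hk : k < m) → f ⟨2*k, by omega⟩ + f ⟨2*k+1, by omega⟩ = F k) :
    ∑ j, f j = ∑ k ∈ Finset.range m, F k := by
  rw [sum_fin_pairs hn f hz]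
  refine Finset.sum_congr rfl fun k hk => ?_
  have hk' := Finset.mem_range.1 hk
  rw [← hF k hk']
  simp only [ext0]
  rw [dif_pos (show 2*k < n by omega), dif_pos (show 2*k+1 < n by omega)]

private lemma sum_fin_pairs_le' {n m : ℕ} (hn : 2*m ≤ n) (f : Fin n → ℝ) (F : ℕ → ℝ)
    (hf : ∀ j, 0 ≤ f j)
    (hF : ∀ k, (hk : k < m) → F k = f ⟨2*k, by omega⟩ + f ⟨2*k+1, by omega⟩) :
    ∑ k ∈ Finset.range m, F k ≤ ∑ j, f j := by
  calc ∑ k ∈ Finset.range m, F k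
      = ∑ k ∈ Finset.range m, (ext0 f (2*k) + ext0 f (2*k+1)) := by
        refine Finset.sum_congr rfl fun k hk => ?_
        have hk' := Finset.mem_range.1 hk
        rw [hF k hk']
        simp only [ext0]
        rw [dif_pos (show 2*k < n by omega), dif_pos (show 2*k+1 < n by omega)]
    _ ≤ ∑ j, f j := sum_fin_pairs_le hn f hf

section Formulas
variable {n m : ℕ} {W : Matrix (Fin n) (Fin n) ℝ} {c : ℕ → ℝ}

private lemma quad_formula (hn : 2*m ≤ n) (hW : W.IsSymm)
    (hsupp : ∀ i j : Fin n, W i j ≠ 0 → ∃ k : ℕ, k < m ∧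
      ((i.val = 2 * k ∧ j.val = 2 * k + 1) ∨ (i.val = 2 * k + 1 ∧ j.val = 2 * k)))
    (hval : ∀ k : ℕ, k < m → ∀ i j : Fin n,
      i.val = 2 * k → j.val = 2 * k + 1 → W i j = c k)
    (x : Fin n → ℝ) :
    x ⬝ᵥ W.mulVec x = ∑ k ∈ Finset.range m, 2 * (c k * (ext0 x (2*k) * ext0 x (2*k+1))) := by
  have hdot : x ⬝ᵥ W.mulVec x = ∑ j, x j * W.mulVec x j := by
    simp [dotProduct]
  rw [hdot]
  refine sum_fin_pairs' hn _ _ ?_ ?_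
  · intro j hj
    rw [mulVec_far hsupp x j hj, mul_zero]
  · intro k hk
    rw [mulVec_even hsupp hval x hk ⟨2*k, by omega⟩ ⟨2*k+1, by omega⟩ rfl rfl,
      mulVec_odd hW hsupp hval x hk ⟨2*k+1, by omega⟩ ⟨2*k, by omega⟩ rfl rfl]
    simp only [ext0, dif_pos (show 2*k < n by omega), dif_pos (show 2*k+1 < n by omega)]
    ring

private lemma lpsum_formula (hn : 2*m ≤ n) (hW : W.IsSymm)
    (hsupp : ∀ i j : Fin n, W i j ≠ 0 → ∃ k : ℕ, k < m ∧
      ((i.val = 2 * k ∧ j.val = 2 * k + 1) ∨ (i.val = 2 * k + 1 ∧ j.val = 2 * k)))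
    (hval : ∀ k : ℕ, k < m → ∀ i j : Fin n,
      i.val = 2 * k → j.val = 2 * k + 1 → W i j = c k)
    (x : Fin n → ℝ) (h : ℝ → ℝ) (h0 : h 0 = 0) :
    ∑ j, h (W.mulVec x j) =
      ∑ k ∈ Finset.range m, (h (c k * ext0 x (2*k+1)) + h (c k * ext0 x (2*k))) := by
  refine sum_fin_pairs' hn _ _ ?_ ?_
  · intro j hj
    rw [mulVec_far hsupp x j hj, h0]
  · intro k hk
    rw [mulVec_even hsupp hval x hk ⟨2*k, by omega⟩ ⟨2*k+1, by omega⟩ rfl rfl,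
      mulVec_odd hW hsupp hval x hk ⟨2*k+1, by omega⟩ ⟨2*k, by omega⟩ rfl rfl]
    simp only [ext0, dif_pos (show 2*k < n by omega), dif_pos (show 2*k+1 < n by omega)]

private lemma xsum_le (hn : 2*m ≤ n) (x : Fin n → ℝ) (g : ℝ → ℝ) (hg : ∀ t, 0 ≤ g t) :
    ∑ k ∈ Finset.range m, (g (ext0 x (2*k)) + g (ext0 x (2*k+1))) ≤ ∑ j, g (x j) := by
  refine sum_fin_pairs_le' hn (fun j => g (x j)) _ (fun j => hg _) ?_
  intro k hk
  simp only [ext0, dif_pos (show 2*k < n by omega), dif_pos (show 2*k+1 < n by omega)]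

private lemma xsum_eq (hn : 2*m ≤ n) (xi : ℕ → ℝ) (hz : ∀ j, 2*m ≤ j → xi j = 0)
    (g : ℝ → ℝ) (hg0 : g 0 = 0) :
    ∑ j : Fin n, g (xi j.val) = ∑ k ∈ Finset.range m, (g (xi (2*k)) + g (xi (2*k+1))) := by
  refine sum_fin_pairs' hn _ _ ?_ ?_
  · intro j hj
    rw [hz j.val hj, hg0]
  · intro k hk
    rfl

private lemma ext0_opt (hn : 2*m ≤ n) (xi : ℕ → ℝ) {k : ℕ} (hk : k < m) :
    ext0 (fun j : Fin n => xi j.val) (2*k) = xi (2*k) ∧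
    ext0 (fun j : Fin n => xi j.val) (2*k+1) = xi (2*k+1) := by
  constructor <;>
    simp only [ext0, dif_pos (show 2*k < n by omega), dif_pos (show 2*k+1 < n by omega)]

end Formulas

/-- For `2 < r ≤ ∞` and a symmetric matrix whose only nonzero entries form pairs
`W_{2k-1,2k} = W_{2k,2k-1} = c_k` (0-based: `(2k, 2k+1)` for `k < m`),
`M_r(W) = ‖W‖_{r→r*} = (2 Σ_k |c_k|^{1/γ})^γ` with `γ = (r-2)/r = 1 - 2/r`. -/
theorem grothendieck_paired {n m : ℕ} (W : Matrix (Fin n) (Fin n) ℝ) (hW : W.IsSymm)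
    (c : ℕ → ℝ) (hn : 2 * m ≤ n) (r : ℝ≥0∞) (hr : 2 < r)
    (hsupp : ∀ i j : Fin n, W i j ≠ 0 → ∃ k : ℕ, k < m ∧
      ((i.val = 2 * k ∧ j.val = 2 * k + 1) ∨ (i.val = 2 * k + 1 ∧ j.val = 2 * k)))
    (hval : ∀ k : ℕ, k < m → ∀ i j : Fin n,
      i.val = 2 * k → j.val = 2 * k + 1 → W i j = c k) :
    grothendieck r W = opNorm r (holderConj r) W ∧
    grothendieck r W =
      (2 * ∑ k ∈ Finset.range m, |c k| ^ (1 / (1 - 2 * (r⁻¹).toReal)))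
        ^ (1 - 2 * (r⁻¹).toReal) := by
  classical
  rcases eq_or_ne r ⊤ with rfl | htop
  · -- case r = ⊤
    have hconj : holderConj ⊤ = 1 := by simp [holderConj]
    have hVsimp : (2 * ∑ k ∈ Finset.range m,
        |c k| ^ (1 / (1 - 2 * ((⊤:ℝ≥0∞)⁻¹).toReal))) ^ (1 - 2 * ((⊤:ℝ≥0∞)⁻¹).toReal)
        = 2 * ∑ k ∈ Finset.range m, |c k| := by
      norm_num
    rw [hconj, hVsimp]
    set S := 2 * ∑ k ∈ Finset.range m, |c k| with hSdef
    have hS0 : 0 ≤ S := by positivity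
    have hext_bound : ∀ x : Fin n → ℝ, lnorm ⊤ x ≤ 1 → ∀ j, |ext0 x j| ≤ 1 := by
      intro x hx j
      have hxb : ∀ i : Fin n, |x i| ≤ 1 := by
        intro i
        have h1 : |x i| ≤ ⨆ i, |x i| :=
          le_ciSup (f := fun i => |x i|) (Set.Finite.bddAbove (Set.finite_range _)) i
        have h2 : (⨆ i, |x i|) ≤ 1 := by simpa [lnorm] using hx
        linarith
      simp only [ext0]
      split
      · exact hxb _
      · norm_num
    have hGub : ∀ v, (∃ x : Fin n → ℝ, lnorm ⊤ x ≤ 1 ∧ v = x ⬝ᵥ W.mulVec x) → v ≤ S := by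
      rintro v ⟨x, hx, rfl⟩
      rw [quad_formula hn hW hsupp hval x, hSdef, Finset.mul_sum]
      refine Finset.sum_le_sum fun k hk => ?_
      have h1 : c k * (ext0 x (2*k) * ext0 x (2*k+1))
          ≤ |c k| * (|ext0 x (2*k)| * |ext0 x (2*k+1)|) := by
        calc c k * (ext0 x (2*k) * ext0 x (2*k+1))
            ≤ |c k * (ext0 x (2*k) * ext0 x (2*k+1))| := le_abs_self _
          _ = |c k| * (|ext0 x (2*k)| * |ext0 x (2*k+1)|) := by rw [abs_mul, abs_mul]
      have h2 : |ext0 x (2*k)| * |ext0 x (2*k+1)| ≤ 1 :=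
        mul_le_one₀ (hext_bound x hx _) (abs_nonneg _) (hext_bound x hx _)
      nlinarith [abs_nonneg (c k),
        mul_le_mul_of_nonneg_left h2 (abs_nonneg (c k))]
    have hOub : ∀ v, (∃ x : Fin n → ℝ, lnorm ⊤ x ≤ 1 ∧
        v = lnorm (1:ℝ≥0∞) (W.mulVec x)) → v ≤ S := by
      rintro v ⟨x, hx, rfl⟩
      have hln1 : lnorm (1:ℝ≥0∞) (W.mulVec x) = ∑ j, |W.mulVec x j| := by
        simp [lnorm]
      have hsum : ∑ j, |W.mulVec x j| = ∑ k ∈ Finset.range m,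
          (|c k * ext0 x (2*k+1)| + |c k * ext0 x (2*k)|) :=
        lpsum_formula hn hW hsupp hval x (fun t => |t|) abs_zero
      rw [hln1, hsum, hSdef, Finset.mul_sum]
      refine Finset.sum_le_sum fun k hk => ?_
      rw [abs_mul, abs_mul]
      have l1 : |c k| * |ext0 x (2*k)| ≤ |c k| * 1 :=
        mul_le_mul_of_nonneg_left (hext_bound x hx _) (abs_nonneg _)
      have l2 : |c k| * |ext0 x (2*k+1)| ≤ |c k| * 1 :=
        mul_le_mul_of_nonneg_left (hext_bound x hx _) (abs_nonneg _)
      linarith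
    -- optimizer
    set sg : ℕ → ℝ := fun k => if c k < 0 then -1 else 1 with hsg
    have hsgabs : ∀ k, |sg k| = 1 := by
      intro k; rw [hsg]; dsimp only; split <;> norm_num
    have hsgc : ∀ k, c k * sg k = |c k| := by
      intro k; rw [hsg]; dsimp only; split
      · rw [abs_of_neg (by assumption)]; ring
      · rw [abs_of_nonneg (le_of_not_gt (by assumption))]; ring
    set xi : ℕ → ℝ := fun j => if j < 2*m then (if j % 2 = 0 then sg (j/2) else 1) else 0
      with hxi
    have hxiz : ∀ j, 2*m ≤ j → xi j = 0 := by
      intro j hj; rw [hxi]; dsimp only; rw [if_neg (by omega)]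
    have hxi0 : ∀ k, k < m → xi (2*k) = sg k := by
      intro k hk
      have hd2 : (2*k)/2 = k := by omega
      rw [hxi]; dsimp only; rw [if_pos (by omega), if_pos (by omega), hd2]
    have hxi1 : ∀ k, k < m → xi (2*k+1) = 1 := by
      intro k hk
      rw [hxi]; dsimp only; rw [if_pos (by omega), if_neg (by omega)]
    have hxib : ∀ j, |xi j| ≤ 1 := by
      intro j
      rw [hxi]; dsimp only
      split
      · split
        · exact le_of_eq (hsgabs _)
        · norm_num
      · norm_num
    set x : Fin n → ℝ := fun j => xi j.val with hxdef
    have hxnorm : lnorm ⊤ x ≤ 1 := by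
      have : lnorm ⊤ x = ⨆ i, |x i| := by simp [lnorm]
      rw [this]
      rcases Nat.eq_zero_or_pos n with hn0 | hn0
      · subst hn0
        rw [Real.iSup_of_isEmpty]
        norm_num
      · haveI : Nonempty (Fin n) := ⟨⟨0, hn0⟩⟩
        exact ciSup_le fun i => hxib _
    have he0 : ∀ k, k < m → ext0 x (2*k) = xi (2*k) := fun k hk => (ext0_opt hn xi hk).1
    have he1 : ∀ k, k < m → ext0 x (2*k+1) = xi (2*k+1) := fun k hk => (ext0_opt hn xi hk).2
    have hquadval : x ⬝ᵥ W.mulVec x = S := by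
      rw [quad_formula hn hW hsupp hval x, hSdef, Finset.mul_sum]
      refine Finset.sum_congr rfl fun k hk => ?_
      have hk' := Finset.mem_range.1 hk
      rw [he0 k hk', he1 k hk', hxi0 k hk', hxi1 k hk', mul_one, hsgc]
    have hopval : lnorm (1:ℝ≥0∞) (W.mulVec x) = S := by
      have hln1 : lnorm (1:ℝ≥0∞) (W.mulVec x) = ∑ j, |W.mulVec x j| := by
        simp [lnorm]
      have hsum : ∑ j, |W.mulVec x j| = ∑ k ∈ Finset.range m,
          (|c k * ext0 x (2*k+1)| + |c k * ext0 x (2*k)|) :=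
        lpsum_formula hn hW hsupp hval x (fun t => |t|) abs_zero
      rw [hln1, hsum, hSdef, Finset.mul_sum]
      refine Finset.sum_congr rfl fun k hk => ?_
      have hk' := Finset.mem_range.1 hk
      rw [he0 k hk', he1 k hk', hxi0 k hk', hxi1 k hk', mul_one, abs_mul, hsgabs, mul_one]
      ring
    have hGeq : grothendieck ⊤ W = S := by
      refine le_antisymm ?_ ?_
      · exact Real.sSup_le (fun v hv => hGub v hv) hS0
      · exact le_csSup ⟨S, fun v hv => hGub v hv⟩ ⟨x, hxnorm, hquadval.symm⟩
    have hOeq : opNorm ⊤ (1:ℝ≥0∞) W = S := by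
      refine le_antisymm ?_ ?_
      · exact Real.sSup_le (fun v hv => hOub v hv) hS0
      · exact le_csSup ⟨S, fun v hv => hOub v hv⟩ ⟨x, hxnorm, hopval.symm⟩
    exact ⟨hGeq.trans hOeq.symm, hGeq⟩
  · -- case r finite
    have hrt2 : (2:ℝ) < r.toReal := by
      have h := (ENNReal.toReal_lt_toReal (by norm_num) htop).2 hr
      simpa using h
    set rt := r.toReal with hrtdef
    have h2 : (0:ℝ) < rt - 2 := by linarith
    have h1 : (0:ℝ) < rt - 1 := by linarith
    have h0 : (0:ℝ) < rt := by linarith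
    set s := rt/(rt-1) with hs
    have hs0 : 0 < s := by positivity
    have hr1 : r ≠ 1 := by
      intro h; rw [h] at hr; norm_num at hr
    have hconj : holderConj r = ENNReal.ofReal s := by
      simp only [holderConj, if_neg hr1, if_neg htop, hs, hrtdef]
    have hconjtop : holderConj r ≠ ⊤ := by rw [hconj]; exact ENNReal.ofReal_ne_top
    have hconjreal : (holderConj r).toReal = s := by
      rw [hconj, ENNReal.toReal_ofReal hs0.le]
    have hgam' : 1 / (1 - 2 * (r⁻¹).toReal) = rt/(rt-2) := by
      rw [ENNReal.toReal_inv, ← hrtdef]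
      rw [show 1 - 2 * rt⁻¹ = (rt-2)/rt by field_simp]
      rw [one_div_div]
    have hgam : 1 - 2 * (r⁻¹).toReal = (rt-2)/rt := by
      rw [ENNReal.toReal_inv, ← hrtdef]; field_simp
    rw [hgam', hgam]
    set Sc := ∑ k ∈ Finset.range m, |c k| ^ (rt/(rt-2)) with hScdef
    set V := (2 * Sc) ^ ((rt-2)/rt) with hVdef
    have hSc0 : 0 ≤ Sc := Finset.sum_nonneg fun k _ => Real.rpow_nonneg (abs_nonneg _) _
    have hV0 : 0 ≤ V := Real.rpow_nonneg (by linarith) _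
    have hlnr : ∀ x : Fin n → ℝ, lnorm r x = (∑ i, |x i| ^ rt) ^ (1/rt) := by
      intro x; rw [lnorm, if_neg htop]
    have hlnconj : ∀ y : Fin n → ℝ, lnorm (holderConj r) y = (∑ i, |y i| ^ s) ^ (1/s) := by
      intro y; rw [lnorm, if_neg hconjtop, hconjreal]
    have h0s : |(0:ℝ)| ^ s = 0 := by rw [abs_zero]; exact Real.zero_rpow hs0.ne'
    have hconstraint : ∀ x : Fin n → ℝ, lnorm r x ≤ 1 →
        ∑ k ∈ Finset.range m, (|ext0 x (2*k)| ^ rt + |ext0 x (2*k+1)| ^ rt) ≤ 1 := by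
      intro x hx
      rw [hlnr x] at hx
      have hsum : ∑ i, |x i| ^ rt ≤ 1 := by
        by_contra hcon
        push_neg at hcon
        have hgt : 1 < (∑ i, |x i| ^ rt) ^ (1/rt) :=
          (Real.one_lt_rpow_iff_of_pos (by linarith)).2
            (Or.inl ⟨hcon, by positivity⟩)
        linarith
      exact le_trans
        (xsum_le hn x (fun t => |t| ^ rt) (fun t => Real.rpow_nonneg (abs_nonneg _) _)) hsum
    have hGub : ∀ v, (∃ x : Fin n → ℝ, lnorm r x ≤ 1 ∧ v = x ⬝ᵥ W.mulVec x) → v ≤ V := by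
      rintro v ⟨x, hx, rfl⟩
      rw [quad_formula hn hW hsupp hval x, hVdef, hScdef]
      exact core_groth hrt2 c _ _ (hconstraint x hx)
    have hOub : ∀ v, (∃ x : Fin n → ℝ, lnorm r x ≤ 1 ∧
        v = lnorm (holderConj r) (W.mulVec x)) → v ≤ V := by
      rintro v ⟨x, hx, rfl⟩
      have hsum : ∑ i, |W.mulVec x i| ^ s = ∑ k ∈ Finset.range m,
          (|c k * ext0 x (2*k+1)| ^ s + |c k * ext0 x (2*k)| ^ s) :=
        lpsum_formula hn hW hsupp hval x (fun t => |t| ^ s) h0s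
      rw [hlnconj, hsum]
      have h1s : 1/s = (rt-1)/rt := by rw [hs, one_div_div]
      rw [h1s, hVdef, hScdef]
      exact core_op hrt2 c _ _ (hconstraint x hx)
    rcases eq_or_lt_of_le hSc0 with hSc | hSc
    · -- Sc = 0
      have hVz : V = 0 := by
        rw [hVdef, ← hSc, mul_zero]
        exact Real.zero_rpow (div_ne_zero h2.ne' h0.ne')
      have hz_norm : lnorm r (0 : Fin n → ℝ) ≤ 1 := by
        rw [hlnr]
        have e : (∑ i : Fin n, |(0 : Fin n → ℝ) i| ^ rt) = 0 := by
          simp [Real.zero_rpow h0.ne']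
        rw [e, Real.zero_rpow (one_div_ne_zero h0.ne')]
        norm_num
      have hGz : (0:ℝ) ∈ {v | ∃ x : Fin n → ℝ, lnorm r x ≤ 1 ∧ v = x ⬝ᵥ W.mulVec x} :=
        ⟨0, hz_norm, by simp⟩
      have hOz : (0:ℝ) ∈ {v | ∃ x : Fin n → ℝ, lnorm r x ≤ 1 ∧
          v = lnorm (holderConj r) (W.mulVec x)} := by
        refine ⟨0, hz_norm, ?_⟩
        rw [Matrix.mulVec_zero, hlnconj]
        have e : (∑ i : Fin n, |(0 : Fin n → ℝ) i| ^ s) = 0 := by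
          simp [Real.zero_rpow hs0.ne']
        rw [e, Real.zero_rpow (one_div_ne_zero hs0.ne')]
      have hGeq : grothendieck r W = V := by
        refine le_antisymm (Real.sSup_le (fun v hv => hGub v hv) hV0) ?_
        rw [hVz]
        exact le_csSup ⟨V, fun v hv => hGub v hv⟩ hGz
      have hOeq : opNorm r (holderConj r) W = V := by
        refine le_antisymm (Real.sSup_le (fun v hv => hOub v hv) hV0) ?_
        rw [hVz]
        exact le_csSup ⟨V, fun v hv => hOub v hv⟩ hOz
      exact ⟨hGeq.trans hOeq.symm, hGeq⟩
    · -- 0 < Sc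
      obtain ⟨xi, hz, F1, F2, F3⟩ := opt hrt2 c hSc
      set x : Fin n → ℝ := fun j => xi j.val with hxdef
      have he0 : ∀ k, k < m → ext0 x (2*k) = xi (2*k) := fun k hk => (ext0_opt hn xi hk).1
      have he1 : ∀ k, k < m → ext0 x (2*k+1) = xi (2*k+1) := fun k hk => (ext0_opt hn xi hk).2
      have hxnorm : lnorm r x ≤ 1 := by
        rw [hlnr]
        have hsum : ∑ i, |x i| ^ rt = 1 := by
          have h := xsum_eq hn xi hz (fun t => |t| ^ rt)
            (by show |(0:ℝ)| ^ rt = 0; rw [abs_zero]; exact Real.zero_rpow h0.ne')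
          exact h.trans F1
        rw [hsum, Real.one_rpow]
      have hquadval : x ⬝ᵥ W.mulVec x = V := by
        rw [quad_formula hn hW hsupp hval x]
        have e : ∑ k ∈ Finset.range m, 2 * (c k * (ext0 x (2*k) * ext0 x (2*k+1)))
            = ∑ k ∈ Finset.range m, 2 * (c k * (xi (2*k) * xi (2*k+1))) := by
          refine Finset.sum_congr rfl fun k hk => ?_
          have hk' := Finset.mem_range.1 hk
          rw [he0 k hk', he1 k hk']
        rw [e, F2, hVdef, hScdef]
      have hopval : lnorm (holderConj r) (W.mulVec x) = V := by
        rw [hlnconj]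
        have hsum : ∑ i, |W.mulVec x i| ^ s = ∑ k ∈ Finset.range m,
            (|c k * xi (2*k+1)| ^ s + |c k * xi (2*k)| ^ s) := by
          have hsum0 : ∑ i, |W.mulVec x i| ^ s = ∑ k ∈ Finset.range m,
              (|c k * ext0 x (2*k+1)| ^ s + |c k * ext0 x (2*k)| ^ s) :=
            lpsum_formula hn hW hsupp hval x (fun t => |t| ^ s) h0s
          rw [hsum0]
          refine Finset.sum_congr rfl fun k hk => ?_
          have hk' := Finset.mem_range.1 hk
          rw [he0 k hk', he1 k hk']
        rw [hsum, F3, ← Real.rpow_mul (by linarith), hVdef, hScdef]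
        rw [show (rt-2)/(rt-1) * (1/s) = (rt-2)/rt by rw [hs]; field_simp]
      have hGeq : grothendieck r W = V := by
        refine le_antisymm (Real.sSup_le (fun v hv => hGub v hv) hV0) ?_
        exact le_csSup ⟨V, fun v hv => hGub v hv⟩ ⟨x, hxnorm, hquadval.symm⟩
      have hOeq : opNorm r (holderConj r) W = V := by
        refine le_antisymm (Real.sSup_le (fun v hv => hOub v hv) hV0) ?_
        exact le_csSup ⟨V, fun v hv => hOub v hv⟩ ⟨x, hxnorm, hopval.symm⟩
      exact ⟨hGeq.trans hOeq.symm, hGeq⟩
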